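/- Let 1 ≤ p < ∞ and consider the unrooted line tree: I = ℤ with total parent map P(i) = i − 1, so that M_n(i) = {i+n} for all n, i. Let ρ = (ρ_i)_{i∈ℤ} be a weight and define ρ̃ : ℝ → ℝ by ρ̃(u) := ρ_{⌊u⌋}(u − ⌊u⌋). Then the map Φ defined by Φ(f)(u) := f_{⌊u⌋}(u − ⌊u⌋) is a surjective linear isometry from L^p_ρ(L(G)) onto the weighted space L^p(ℝ, ρ̃(u)du), and Φ intertwines the tree translation with the classical left translation on the real line: for every f ∈ L^p_ρ(L(G)) and every t ≥ 0, Φ(T_t f)(u) = Φ(f)(u + t) for almost every u ∈ ℝ. -/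

import Mathlib

open MeasureTheory ENNReal

noncomputable section

/-- `nfl t s = ⌊s + t⌋ ∈ ℕ`. -/
def nfl (t s : ℝ) : ℕ := ⌊s + t⌋₊

/-- The left translation on the unrooted line tree (`I = ℤ`, total parent map `P i = i - 1`,
so `M_n(i) = {i + n}`): `(T_t f)_i(s) = f_{i+n(t,s)}(t + s - n(t,s))`. -/
def TleftLine (f : ℤ → ℝ → ℝ) (t : ℝ) (i : ℤ) (s : ℝ) : ℝ :=
  f (i + (nfl t s : ℤ)) (t + s - (nfl t s : ℝ))

/-- The `p`-th power of the norm of a family `f` in `L^p_ρ(L(G))`: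
`‖f‖_{p,ρ}^p = ∑_{i ∈ ℤ} ∫_0^1 |f_i(s)|^p ρ_i(s) ds`, with values in `[0,∞]`. -/
def pnorm (ρ : ℤ → ℝ → ℝ) (p : ℝ) (f : ℤ → ℝ → ℝ) : ℝ≥0∞ :=
  ∑' i, ∫⁻ s in Set.Icc (0 : ℝ) 1, ENNReal.ofReal (|f i s| ^ p * ρ i s)

/-- Membership in `L^p_ρ(L(G))`. -/
def memLprho (ρ : ℤ → ℝ → ℝ) (p : ℝ) (f : ℤ → ℝ → ℝ) : Prop :=
  (∀ i, AEMeasurable (f i) (volume.restrict (Set.Icc (0 : ℝ) 1))) ∧ pnorm ρ p f < ⊤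

/-- The identification `Φ(f)(u) = f_{⌊u⌋}(u - ⌊u⌋)` of families on the line tree with
functions on `ℝ`. -/
def Phi (f : ℤ → ℝ → ℝ) (u : ℝ) : ℝ := f ⌊u⌋ (u - (⌊u⌋ : ℝ))

/-- The glued weight `ρ̃(u) = ρ_{⌊u⌋}(u - ⌊u⌋)` on `ℝ`. -/
def rhoTilde (ρ : ℤ → ℝ → ℝ) (u : ℝ) : ℝ := ρ ⌊u⌋ (u - (⌊u⌋ : ℝ))

/-- The weighted measure `ρ̃(u) du` on `ℝ`. -/
def lineMeasure (ρ : ℤ → ℝ → ℝ) : Measure ℝ :=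
  volume.withDensity fun u => ENNReal.ofReal (rhoTilde ρ u)

section Aux

open Set

/-- `Phi` of a family of measurable functions is measurable. -/
lemma phi_measurable {f : ℤ → ℝ → ℝ} (hf : ∀ i, Measurable (f i)) : Measurable (Phi f) := by
  have h2 : Measurable fun q : ℝ × ℤ => f q.2 q.1 :=
    measurable_from_prod_countable_left fun i => hf i
  have h1 : Measurable fun u : ℝ => ((Int.fract u, ⌊u⌋) : ℝ × ℤ) :=
    measurable_fract.prodMk Int.measurable_floor
  have : Phi f = fun u : ℝ => f ⌊u⌋ (Int.fract u) := rfl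
  rw [this]
  exact h2.comp h1

/-- If two families agree a.e. on `[0,1]` componentwise, their `Phi`'s agree a.e. on `ℝ`. -/
lemma phi_ae_congr {f g : ℤ → ℝ → ℝ}
    (h : ∀ i, f i =ᵐ[volume.restrict (Set.Icc (0:ℝ) 1)] g i) :
    Phi f =ᵐ[(volume : Measure ℝ)] Phi g := by
  have hN : ∀ i : ℤ, volume ({s | f i s ≠ g i s} ∩ Set.Icc (0:ℝ) 1) = 0 := by
    intro i
    have := h i
    rwa [Filter.EventuallyEq, ae_iff, Measure.restrict_apply' measurableSet_Icc] at this
  have hsub : {u : ℝ | ¬ Phi f u = Phi g u} ⊆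
      ⋃ i : ℤ, (fun x : ℝ => x + (-(i:ℝ))) ⁻¹' ({s | f i s ≠ g i s} ∩ Set.Icc (0:ℝ) 1) := by
    intro u hu
    have h1 : u + -((⌊u⌋:ℤ):ℝ) = u - ((⌊u⌋:ℤ):ℝ) := by ring
    refine Set.mem_iUnion.2 ⟨⌊u⌋, ?_⟩
    simp only [Set.mem_preimage, Set.mem_inter_iff, Set.mem_setOf_eq, Set.mem_Icc, h1]
    refine ⟨fun hcon => hu hcon, ?_, ?_⟩
    · linarith [Int.floor_le u]
    · linarith [Int.lt_floor_add_one u]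
  refine ae_iff.2 (measure_mono_null hsub (measure_iUnion_null fun i => ?_))
  rw [measure_preimage_add_right]
  exact hN i

/-- Decomposition of a Lebesgue integral over `ℝ` into integer translates of `[0,1)`. -/
lemma lintegral_eq_tsum (F : ℝ → ℝ≥0∞) :
    ∫⁻ u, F u = ∑' i : ℤ, ∫⁻ s in Set.Ico (0:ℝ) 1, F (s + (i:ℝ)) := by
  have hd : Pairwise (Function.onFun Disjoint fun i : ℤ => Set.Ico (i:ℝ) ((i:ℝ)+1)) := by
    intro i j hij
    rw [Function.onFun, Set.disjoint_left]
    rintro x ⟨h1, h2⟩ ⟨h3, h4⟩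
    have hi : ⌊x⌋ = i := Int.floor_eq_iff.2 ⟨h1, by exact_mod_cast h2⟩
    have hj : ⌊x⌋ = j := Int.floor_eq_iff.2 ⟨h3, by exact_mod_cast h4⟩
    exact hij (hi ▸ hj)
  have hU : ⋃ i : ℤ, Set.Ico (i:ℝ) ((i:ℝ)+1) = Set.univ := by
    ext x
    simp only [Set.mem_iUnion, Set.mem_univ, iff_true, Set.mem_Ico]
    exact ⟨⌊x⌋, Int.floor_le x, Int.lt_floor_add_one x⟩
  calc
    ∫⁻ u, F u = ∫⁻ u, F u ∂(volume.restrict (⋃ i : ℤ, Set.Ico (i:ℝ) ((i:ℝ)+1))) := by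
      rw [hU, Measure.restrict_univ]
    _ = ∑' i : ℤ, ∫⁻ u in Set.Ico (i:ℝ) ((i:ℝ)+1), F u := by
      rw [Measure.restrict_iUnion hd fun i => measurableSet_Ico, lintegral_sum_measure]
    _ = ∑' i : ℤ, ∫⁻ s in Set.Ico (0:ℝ) 1, F (s + (i:ℝ)) := by
      refine tsum_congr fun i => ?_
      have h2 : (fun x : ℝ => x + (i:ℝ)) ⁻¹' (Set.Ico (i:ℝ) ((i:ℝ)+1)) = Set.Ico (0:ℝ) 1 := by
        ext x
        simp only [Set.mem_preimage, Set.mem_Ico]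
        constructor
        · rintro ⟨a, b⟩; constructor <;> linarith
        · rintro ⟨a, b⟩; constructor <;> linarith
      have hmap : volume.restrict (Set.Ico (i:ℝ) ((i:ℝ)+1)) =
          Measure.map (MeasurableEquiv.addRight (i:ℝ)) (volume.restrict (Set.Ico (0:ℝ) 1)) := by
        have hco : ⇑(MeasurableEquiv.addRight (i:ℝ)) = fun x : ℝ => x + (i:ℝ) := rfl
        rw [hco, ← h2, ← Measure.restrict_map (measurable_add_const (i:ℝ)) measurableSet_Ico,
          map_add_right_eq_self volume (i:ℝ)]
      rw [hmap, MeasureTheory.lintegral_map_equiv]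
      rfl

/-- The main computation: for measurable data, the `p`-integral of `Phi f` against
`lineMeasure ρ` is `pnorm ρ p f`. -/
lemma lintegral_phi_eq_pnorm (p : ℝ) (hp0 : 0 ≤ p) (ρ f : ℤ → ℝ → ℝ)
    (hρ : ∀ i, Measurable (ρ i)) (hf : ∀ i, Measurable (f i)) :
    ∫⁻ u, ENNReal.ofReal (|Phi f u| ^ p) ∂(lineMeasure ρ) = pnorm ρ p f := by
  have hmρ : Measurable fun u => ENNReal.ofReal (rhoTilde ρ u) := by
    have : rhoTilde ρ = Phi ρ := rfl
    rw [this]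
    exact ENNReal.measurable_ofReal.comp (phi_measurable hρ)
  have hmf : Measurable fun u => ENNReal.ofReal (|Phi f u| ^ p) := by
    have hc : Continuous fun x : ℝ => |x| ^ p :=
      continuous_abs.rpow_const fun x => Or.inr hp0
    exact ENNReal.measurable_ofReal.comp (hc.measurable.comp (phi_measurable hf))
  rw [lineMeasure, lintegral_withDensity_eq_lintegral_mul volume hmρ hmf]
  simp only [Pi.mul_apply]
  rw [lintegral_eq_tsum fun u => (ENNReal.ofReal (rhoTilde ρ u)) * ENNReal.ofReal (|Phi f u| ^ p)]
  refine tsum_congr fun i => ?_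
  rw [← Measure.restrict_congr_set Ico_ae_eq_Icc]
  refine setLIntegral_congr_fun_ae measurableSet_Ico (Filter.Eventually.of_forall fun s hs => ?_)
  have hfl : ⌊s + (i:ℝ)⌋ = i := by
    rw [show s + (i:ℝ) = s + (i : ℤ) by push_cast; ring, Int.floor_add_intCast,
      Int.floor_eq_zero_iff.2 hs, zero_add]
  have harg : s + (i:ℝ) - ((⌊s + (i:ℝ)⌋ : ℤ) : ℝ) = s := by rw [hfl]; ring
  simp only [Phi, rhoTilde, hfl, harg, add_sub_cancel_right]
  rw [ENNReal.ofReal_mul (by positivity), mul_comm]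

/-- Norms in `ℝ≥0∞` of `p`-th powers. -/
lemma ofReal_abs_rpow (p : ℝ) (hp0 : 0 ≤ p) (x : ℝ) :
    (‖x‖₊ : ℝ≥0∞) ^ p = ENNReal.ofReal (|x| ^ p) := by
  rw [← enorm_eq_nnnorm, Real.enorm_eq_ofReal_abs]
  exact ENNReal.ofReal_rpow_of_nonneg (abs_nonneg x) hp0

end Aux

/-- **Remark 1.6 (unrooted line)**.  Let `1 ≤ p < ∞` and consider the unrooted line tree
`I = ℤ` with `M_n(i) = {i+n}`.  Let `ρ = (ρ_i)_{i ∈ ℤ}` be a weight and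
`ρ̃(u) = ρ_{⌊u⌋}(u - ⌊u⌋)`.  Then `Φ(f)(u) = f_{⌊u⌋}(u - ⌊u⌋)` is a surjective linear
isometry from `L^p_ρ(L(G))` onto `L^p(ℝ, ρ̃(u)du)`, and `Φ` intertwines the tree translation
with the classical left translation on the line: `Φ(T_t f)(u) = Φ(f)(u + t)` for a.e.
`u ∈ ℝ`. -/
theorem line_tree_isometry_real (p : ℝ) (hp : 1 ≤ p) (ρ : ℤ → ℝ → ℝ)
    (hint : ∀ i, IntegrableOn (ρ i) (Set.Icc (0 : ℝ) 1))
    (hpos : ∀ i, ∀ᵐ s ∂(volume.restrict (Set.Icc (0 : ℝ) 1)), 0 < ρ i s) :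
    (∀ (f g : ℤ → ℝ → ℝ) (a b : ℝ),
      Phi (fun i s => a * f i s + b * g i s) = fun u => a * Phi f u + b * Phi g u) ∧
    (∀ f, memLprho ρ p f →
      MemLp (Phi f) (ENNReal.ofReal p) (lineMeasure ρ) ∧
      ∫⁻ u, ENNReal.ofReal (|Phi f u| ^ p) ∂(lineMeasure ρ) = pnorm ρ p f) ∧
    (∀ g : ℝ → ℝ, MemLp g (ENNReal.ofReal p) (lineMeasure ρ) →
      ∃ f, memLprho ρ p f ∧ Phi f =ᵐ[lineMeasure ρ] g) ∧
    (∀ f, memLprho ρ p f → ∀ t ≥ (0 : ℝ),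
      ∀ᵐ u : ℝ, Phi (TleftLine f t) u = Phi f (u + t)) := by
  have hp0 : 0 ≤ p := le_trans zero_le_one hp
  have hppos : 0 < p := lt_of_lt_of_le zero_lt_one hp
  -- measurable representative of the weight
  have hρae : ∀ i, AEMeasurable (ρ i) (volume.restrict (Set.Icc (0:ℝ) 1)) := fun i =>
    (hint i).aestronglyMeasurable.aemeasurable
  set ρ' : ℤ → ℝ → ℝ := fun i => (hρae i).mk (ρ i) with hρ'def
  have hρ'meas : ∀ i, Measurable (ρ' i) := fun i => (hρae i).measurable_mk
  have hρeq : ∀ i, ρ i =ᵐ[volume.restrict (Set.Icc (0:ℝ) 1)] ρ' i := fun i => (hρae i).ae_eq_mk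
  have hrtilde : rhoTilde ρ =ᵐ[(volume : Measure ℝ)] rhoTilde ρ' := phi_ae_congr hρeq
  have hμeq : lineMeasure ρ = lineMeasure ρ' :=
    withDensity_congr_ae (hrtilde.mono fun u hu => by dsimp only; rw [hu])
  have hac : (lineMeasure ρ) ≪ (volume : Measure ℝ) :=
    withDensity_absolutelyContinuous _ _
  -- pnorm only depends on a.e. classes
  have hpnorm_congr : ∀ f g : ℤ → ℝ → ℝ,
      (∀ i, f i =ᵐ[volume.restrict (Set.Icc (0:ℝ) 1)] g i) →
      pnorm ρ p f = pnorm ρ' p g := by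
    intro f g hfg
    refine tsum_congr fun i => lintegral_congr_ae ?_
    filter_upwards [hfg i, hρeq i] with s h1 h2
    rw [h1, h2]
  -- the key identity, for any f in L^p_ρ
  have hkey : ∀ f : ℤ → ℝ → ℝ,
      (∀ i, AEMeasurable (f i) (volume.restrict (Set.Icc (0:ℝ) 1))) →
      (∫⁻ u, ENNReal.ofReal (|Phi f u| ^ p) ∂(lineMeasure ρ) = pnorm ρ p f) ∧
      AEStronglyMeasurable (Phi f) (lineMeasure ρ) := by
    intro f hf
    set f' : ℤ → ℝ → ℝ := fun i => (hf i).mk (f i) with hf'def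
    have hf'meas : ∀ i, Measurable (f' i) := fun i => (hf i).measurable_mk
    have hfeq : ∀ i, f i =ᵐ[volume.restrict (Set.Icc (0:ℝ) 1)] f' i := fun i => (hf i).ae_eq_mk
    have hphi : Phi f =ᵐ[lineMeasure ρ] Phi f' := hac.ae_eq (phi_ae_congr hfeq)
    constructor
    · calc
        ∫⁻ u, ENNReal.ofReal (|Phi f u| ^ p) ∂(lineMeasure ρ)
            = ∫⁻ u, ENNReal.ofReal (|Phi f' u| ^ p) ∂(lineMeasure ρ) := by
          refine lintegral_congr_ae (hphi.mono fun u hu => by dsimp only; rw [hu])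
        _ = ∫⁻ u, ENNReal.ofReal (|Phi f' u| ^ p) ∂(lineMeasure ρ') := by rw [hμeq]
        _ = pnorm ρ' p f' := lintegral_phi_eq_pnorm p hp0 ρ' f' hρ'meas hf'meas
        _ = pnorm ρ p f := (hpnorm_congr f f' hfeq).symm
    · exact ((phi_measurable hf'meas).aestronglyMeasurable).congr hphi.symm
  have hq0 : ENNReal.ofReal p ≠ 0 := by
    simp [ENNReal.ofReal_eq_zero, not_le, hppos]
  have hqt : ENNReal.ofReal p ≠ ⊤ := ENNReal.ofReal_ne_top
  have htoReal : (ENNReal.ofReal p).toReal = p := ENNReal.toReal_ofReal hp0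
  refine ⟨?_, ?_, ?_, ?_⟩
  · -- linearity
    intro f g a b
    funext u
    rfl
  · -- isometry into
    intro f hf
    obtain ⟨hfint, hphi_meas⟩ := hkey f hf.1
    refine ⟨⟨hphi_meas, ?_⟩, hfint⟩
    rw [eLpNorm_eq_lintegral_rpow_enorm_toReal hq0 hqt, htoReal]
    have : ∫⁻ u, (‖Phi f u‖₊ : ℝ≥0∞) ^ p ∂(lineMeasure ρ) = pnorm ρ p f := by
      rw [← hfint]
      exact lintegral_congr fun u => ofReal_abs_rpow p hp0 _
    simp only [enorm_eq_nnnorm]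
    rw [this]
    exact ENNReal.rpow_lt_top_of_nonneg (by positivity) hf.2.ne
  · -- surjectivity
    intro g hg
    have hgm := hg.1
    set g' : ℝ → ℝ := hgm.mk g with hg'def
    have hg'meas : Measurable g' := hgm.measurable_mk
    have hg'eq : g =ᵐ[lineMeasure ρ] g' := hgm.ae_eq_mk
    set f : ℤ → ℝ → ℝ := fun i s => g' (s + (i:ℝ)) with hfdef
    have hfm : ∀ i, Measurable (f i) := fun i => hg'meas.comp (measurable_add_const _)
    have hPhif : Phi f = g' := by
      funext u
      show g' (u - (⌊u⌋:ℝ) + (⌊u⌋:ℝ)) = g' u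
      congr 1
      ring
    have hPhig : Phi f =ᵐ[lineMeasure ρ] g := by
      rw [hPhif]; exact hg'eq.symm
    have hmem' : MemLp g' (ENNReal.ofReal p) (lineMeasure ρ) := MemLp.ae_eq hg'eq hg
    have hfin : ∫⁻ u, ENNReal.ofReal (|Phi f u| ^ p) ∂(lineMeasure ρ) < ⊤ := by
      have h1 : ∫⁻ u, ENNReal.ofReal (|Phi f u| ^ p) ∂(lineMeasure ρ)
          = ∫⁻ u, (‖g' u‖₊ : ℝ≥0∞) ^ p ∂(lineMeasure ρ) := by
        rw [hPhif]
        exact lintegral_congr fun u => (ofReal_abs_rpow p hp0 _).symm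
      have h2 := hmem'.2
      rw [eLpNorm_eq_lintegral_rpow_enorm_toReal hq0 hqt, htoReal] at h2
      have h3 : (∫⁻ u, (‖g' u‖₊ : ℝ≥0∞) ^ p ∂(lineMeasure ρ)) =
          ((∫⁻ u, (‖g' u‖₊ : ℝ≥0∞) ^ p ∂(lineMeasure ρ)) ^ (1/p)) ^ p := by
        rw [← ENNReal.rpow_mul, one_div_mul_cancel hppos.ne', ENNReal.rpow_one]
      rw [h1, h3]
      exact ENNReal.rpow_lt_top_of_nonneg hp0 h2.ne
    have hfae : ∀ i, AEMeasurable (f i) (volume.restrict (Set.Icc (0:ℝ) 1)) := fun i =>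
      (hfm i).aemeasurable
    refine ⟨f, ⟨hfae, ?_⟩, hPhig⟩
    rw [← (hkey f hfae).1]
    exact hfin
  · -- translation intertwining
    intro f _ t ht
    refine Filter.Eventually.of_forall fun u => ?_
    have hs0 : (0:ℝ) ≤ u - (⌊u⌋:ℝ) := sub_nonneg.2 (Int.floor_le u)
    have hn : ((nfl t (u - (⌊u⌋:ℝ)) : ℕ) : ℤ) = ⌊u + t⌋ - ⌊u⌋ := by
      rw [nfl, Int.natCast_floor_eq_floor (by linarith)]
      rw [show u - (⌊u⌋:ℝ) + t = u + t - ((⌊u⌋ : ℤ) : ℝ) by push_cast; ring,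
        Int.floor_sub_intCast]
    have hnr : ((nfl t (u - (⌊u⌋:ℝ)) : ℕ) : ℝ) = (⌊u + t⌋ : ℝ) - (⌊u⌋ : ℝ) := by
      rw [← Int.cast_natCast, hn]
      push_cast
      ring
    show f (⌊u⌋ + ((nfl t (u - (⌊u⌋:ℝ)) : ℕ) : ℤ))
        (t + (u - (⌊u⌋:ℝ)) - ((nfl t (u - (⌊u⌋:ℝ)) : ℕ) : ℝ))
      = f ⌊u + t⌋ (u + t - (⌊u + t⌋ : ℝ))
    rw [hn, hnr]
    congr 1
    · omega
    · ring

end
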